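/- Let X be an abelian group with 2X = X, and let f, g : X → ℂ be functions that are not identically zero, each satisfying the Hermitian condition f(−x) = conj(f(x)). If f and g satisfy the Kac–Bernstein functional equation f(x+y)·g(x−y) = f(x)·f(y)·g(x)·g(−y) for all x, y ∈ X, then there exist a subgroup G of X such that the quotient X/G has no elements of order 2 (i.e. 2x ∈ G implies x ∈ G), signs ε, δ ∈ {−1, 1}, unitary characters α, β of G, a quadratic function P : G → ℝ, and a real constant r, such that f(x) = ε·α(x)·exp(P(x) + r) for x ∈ G and f(x) = 0 for x ∉ G, while g(x) = δ·β(x)·exp(P(x) − r) for x ∈ G and g(x) = 0 for x ∉ G. -/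

import Mathlib

theorem kac_bernstein_hermitian_not_vanishing {X : Type*} [AddCommGroup X]
    (h2 : ∀ x : X, ∃ y : X, 2 • y = x)
    (f g : X → ℂ)
    (hfne : ∃ x, f x ≠ 0) (hgne : ∃ x, g x ≠ 0)
    (hfH : ∀ x : X, f (-x) = starRingEnd ℂ (f x))
    (hgH : ∀ x : X, g (-x) = starRingEnd ℂ (g x))
    (hKB : ∀ x y : X, f (x + y) * g (x - y) = f x * f y * g x * g (-y)) :
    ∃ (G : AddSubgroup X) (ε δ : ℝ) (α β : G → ℂ) (P : G → ℝ) (r : ℝ),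
      (∀ x : X, 2 • x ∈ G → x ∈ G) ∧
      (ε = 1 ∨ ε = -1) ∧ (δ = 1 ∨ δ = -1) ∧
      (∀ x y : G, α (x + y) = α x * α y) ∧ (∀ x : G, ‖α x‖ = 1) ∧
      (∀ x y : G, β (x + y) = β x * β y) ∧ (∀ x : G, ‖β x‖ = 1) ∧
      (∀ x y : G, P (x + y) + P (x - y) = 2 * (P x + P y)) ∧
      (∀ (x : X) (hx : x ∈ G),
          f x = (ε : ℂ) * α ⟨x, hx⟩ * Complex.exp ((P ⟨x, hx⟩ + r : ℝ) : ℂ)) ∧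
      (∀ x : X, x ∉ G → f x = 0) ∧
      (∀ (x : X) (hx : x ∈ G),
          g x = (δ : ℂ) * β ⟨x, hx⟩ * Complex.exp ((P ⟨x, hx⟩ - r : ℝ) : ℂ)) ∧
      (∀ x : X, x ∉ G → g x = 0) := by
  classical
  have hdouble : ∀ x : X, ∃ y : X, y + y = x := by
    intro x; obtain ⟨y, hy⟩ := h2 x; exact ⟨y, by rwa [two_nsmul] at hy⟩
  -- Step 1 : f 0 * g 0 = 1
  have hc : f 0 * g 0 = 1 := by
    by_contra hcne
    have h00 := hKB 0 0
    simp only [add_zero, sub_zero, neg_zero] at h00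
    have hzero : f 0 * g 0 = 0 := by
      have hfac : (f 0 * g 0) * (f 0 * g 0 - 1) = 0 := by linear_combination -h00
      rcases mul_eq_zero.1 hfac with h | h
      · exact h
      · exact absurd (by linear_combination h) hcne
    have hall : ∀ x : X, f x * g x = 0 := by
      intro x
      have h := hKB x 0
      simp only [add_zero, sub_zero, neg_zero] at h
      calc f x * g x = (f x * g x) * (f 0 * g 0) := by linear_combination h
        _ = 0 := by rw [hzero]; ring
    obtain ⟨u, hu⟩ := hfne
    obtain ⟨v, hv⟩ := hgne
    obtain ⟨w, hw⟩ := hdouble (u + v)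
    have h := hKB w (u - w)
    have e1 : w + (u - w) = u := by abel
    have e2 : w - (u - w) = v := by
      have : w - (u - w) = (w + w) - u := by abel
      rw [this, hw]; abel
    rw [e1, e2] at h
    have : f u * g v = 0 := by
      rw [h]
      calc f w * f (u - w) * g w * g (-(u - w))
          = (f w * g w) * (f (u - w) * g (-(u - w))) := by ring
        _ = 0 := by rw [hall w]; ring
    exact (mul_ne_zero hu hv) this
  have hf0 : f 0 ≠ 0 := fun h => by simp [h] at hc
  have hg0 : g 0 ≠ 0 := fun h => by simp [h] at hc
  -- modulus function
  set m : X → ℝ := fun x => ‖f x‖ * ‖g x‖ with hm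
  have hm0 : m 0 = 1 := by
    have := congrArg (‖·‖) hc
    simpa [hm, map_mul] using this
  have habsfneg : ∀ x : X, ‖f (-x)‖ = ‖f x‖ := by
    intro x; rw [hfH]; exact Complex.norm_conj _
  have habsgneg : ∀ x : X, ‖g (-x)‖ = ‖g x‖ := by
    intro x; rw [hgH]; exact Complex.norm_conj _
  have hmeven : ∀ x : X, m (-x) = m x := by
    intro x; simp only [hm, habsfneg, habsgneg]
  have hmnn : ∀ x : X, 0 ≤ m x := fun x =>
    mul_nonneg (norm_nonneg _) (norm_nonneg _)
  have R1 : ∀ x y : X, ‖f (x + y)‖ * ‖g (x - y)‖ =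
      ‖f x‖ * ‖f y‖ * ‖g x‖ * ‖g y‖ := by
    intro x y
    have := congrArg (‖·‖) (hKB x y)
    simpa [map_mul, habsgneg] using this
  have key5 : ∀ x y : X, m (x + y) * m (x - y) = (m x)^2 * (m y)^2 := by
    intro x y
    have h1 := R1 x y
    have h2' := R1 x (-y)
    rw [show x + -y = x - y from (sub_eq_add_neg x y).symm,
        show x - -y = x + y by abel, habsfneg, habsgneg] at h2'
    calc m (x + y) * m (x - y)
        = (‖f (x + y)‖ * ‖g (x - y)‖) *
          (‖f (x - y)‖ * ‖g (x + y)‖) := by simp only [hm]; ring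
      _ = (m x)^2 * (m y)^2 := by rw [h1, h2']; simp only [hm]; ring
  -- the subgroup
  set G : AddSubgroup X :=
    { carrier := {x : X | m x ≠ 0}
      zero_mem' := by simp [hm0]
      add_mem' := by
        intro a b ha hb
        simp only [Set.mem_setOf_eq] at *
        intro h
        have := key5 a b
        rw [h, zero_mul] at this
        have : (m a)^2 * (m b)^2 = 0 := this.symm
        rcases mul_eq_zero.1 this with h' | h'
        · exact ha (pow_eq_zero_iff (by norm_num)|>.1 h')
        · exact hb (pow_eq_zero_iff (by norm_num)|>.1 h')
      neg_mem' := by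
        intro a ha
        simp only [Set.mem_setOf_eq] at *
        rwa [hmeven] } with hG
  have hGmem : ∀ x : X, x ∈ G ↔ m x ≠ 0 := fun x => Iff.rfl
  have hmpos : ∀ x : X, x ∈ G → 0 < m x := by
    intro x hx
    exact lt_of_le_of_ne (hmnn x) (Ne.symm ((hGmem x).1 hx))
  have hmdouble : ∀ x : X, m (x + x) = (m x)^4 := by
    intro x
    have := key5 x x
    rw [sub_self, hm0, mul_one] at this
    rw [this]; ring
  have hGdiv : ∀ x : X, 2 • x ∈ G → x ∈ G := by
    intro x hx
    rw [two_nsmul] at hx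
    rw [hGmem] at hx ⊢
    intro h
    apply hx
    rw [hmdouble, h]; ring
  -- doubles identities
  have key2a : ∀ x : X, ‖f (x + x)‖ * ‖g 0‖ = (m x)^2 := by
    intro x
    have := R1 x x
    rw [sub_self] at this
    rw [this]; simp only [hm]; ring
  have key2b : ∀ x : X, ‖f 0‖ * ‖g (x + x)‖ = (m x)^2 := by
    intro x
    have := R1 x (-x)
    rw [add_neg_cancel, show x - -x = x + x by abel, habsfneg, habsgneg] at this
    rw [this]; simp only [hm]; ring
  have haf0 : 0 < ‖f 0‖ := norm_pos_iff.2 hf0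
  have hag0 : 0 < ‖g 0‖ := norm_pos_iff.2 hg0
  have supp_f : ∀ x : X, x ∉ G → f x = 0 := by
    intro x hx
    by_contra hfx
    obtain ⟨y, hy⟩ := hdouble x
    apply hx
    rw [← hy]
    have h := key2a y
    rw [hy] at h
    have hmy : m y ≠ 0 := by
      intro h0
      rw [h0] at h
      have : ‖f x‖ * ‖g 0‖ = 0 := by rw [h]; ring
      rcases mul_eq_zero.1 this with h' | h'
      · exact hfx (norm_eq_zero.1 h')
      · exact (ne_of_gt hag0) h'
    exact G.add_mem hmy hmy
  have supp_g : ∀ x : X, x ∉ G → g x = 0 := by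
    intro x hx
    by_contra hgx
    obtain ⟨y, hy⟩ := hdouble x
    apply hx
    rw [← hy]
    have h := key2b y
    rw [hy] at h
    have hmy : m y ≠ 0 := by
      intro h0
      rw [h0] at h
      have : ‖f 0‖ * ‖g x‖ = 0 := by rw [h]; ring
      rcases mul_eq_zero.1 this with h' | h'
      · exact (ne_of_gt haf0) h'
      · exact hgx (norm_eq_zero.1 h')
    exact G.add_mem hmy hmy
  have hfne0 : ∀ x : X, x ∈ G → f x ≠ 0 := by
    intro x hx h
    exact (hGmem x).1 hx (by simp [hm, h])
  have hgne0 : ∀ x : X, x ∈ G → g x ≠ 0 := by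
    intro x hx h
    exact (hGmem x).1 hx (by simp [hm, h])
  -- constant modulus ratio
  have ratio : ∀ x : X, ‖f x‖ * ‖g 0‖ =
      ‖g x‖ * ‖f 0‖ := by
    intro x
    obtain ⟨y, hy⟩ := hdouble x
    have ha := key2a y
    have hb := key2b y
    rw [hy] at ha hb
    rw [ha, ← hb]; ring
  have hFG : ‖f 0‖ * ‖g 0‖ = 1 := by
    have := hm0
    simpa [hm] using this
  -- P and r
  set r : ℝ := Real.log (‖f 0‖) with hr
  have her : Real.exp r = ‖f 0‖ := Real.exp_log haf0
  have herneg : Real.exp (-r) = ‖g 0‖ := by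
    rw [Real.exp_neg, her]
    field_simp
    linarith [hFG]
  set P : X → ℝ := fun x => Real.log (m x) / 2 with hP
  have hP0 : P 0 = 0 := by simp [hP, hm0]
  have hPeven : ∀ x : X, P (-x) = P x := by intro x; simp [hP, hmeven]
  have hPexp : ∀ x : X, x ∈ G → Real.exp (2 * P x) = m x := by
    intro x hx
    rw [hP]
    simp only
    rw [show 2 * (Real.log (m x) / 2) = Real.log (m x) by ring]
    exact Real.exp_log (hmpos x hx)
  have hPquad : ∀ x y : X, x ∈ G → y ∈ G → P (x + y) + P (x - y) = 2 * (P x + P y) := by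
    intro x y hx hy
    have hxy1 : (x + y) ∈ G := G.add_mem hx hy
    have hxy2 : (x - y) ∈ G := by
      rw [sub_eq_add_neg]; exact G.add_mem hx (G.neg_mem hy)
    have e1 : Real.log (m (x + y)) + Real.log (m (x - y)) =
        Real.log (m x) * 2 + Real.log (m y) * 2 := by
      rw [← Real.log_mul (ne_of_gt (hmpos _ hxy1)) (ne_of_gt (hmpos _ hxy2)), key5,
        Real.log_mul (pow_ne_zero 2 (ne_of_gt (hmpos _ hx))) (pow_ne_zero 2 (ne_of_gt (hmpos _ hy))),
        Real.log_pow, Real.log_pow]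
      push_cast; ring
    simp only [hP]; linarith
  -- modulus formulas
  have habsf : ∀ x : X, x ∈ G → ‖f x‖ = Real.exp (P x + r) := by
    intro x hx
    have h1 : Real.exp (P x + r) ^ 2 = m x * (‖f 0‖)^2 := by
      rw [sq, ← Real.exp_add, show (P x + r) + (P x + r) = 2 * P x + (r + r) by ring,
        Real.exp_add, hPexp x hx, Real.exp_add, her]
      ring
    have h2' : (‖f x‖)^2 = m x * (‖f 0‖)^2 := by
      simp only [hm]
      linear_combination (‖f x‖ * ‖f 0‖) * ratio x
        - (‖f x‖)^2 * hFG
    rw [← Real.sqrt_sq (norm_nonneg (f x)), h2', ← h1,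
      Real.sqrt_sq (Real.exp_pos _).le]
  have habsg : ∀ x : X, x ∈ G → ‖g x‖ = Real.exp (P x - r) := by
    intro x hx
    have h1 : Real.exp (P x - r) ^ 2 = m x * (‖g 0‖)^2 := by
      rw [sq, ← Real.exp_add, show (P x - r) + (P x - r) = 2 * P x + (-r + -r) by ring,
        Real.exp_add, hPexp x hx, Real.exp_add, herneg]
      ring
    have h2' : (‖g x‖)^2 = m x * (‖g 0‖)^2 := by
      simp only [hm]
      linear_combination (-(‖g x‖ * ‖g 0‖)) * ratio x
        - (‖g x‖)^2 * hFG
    rw [← Real.sqrt_sq (norm_nonneg (g x)), h2', ← h1,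
      Real.sqrt_sq (Real.exp_pos _).le]
  -- sign
  set ε : ℝ := if 0 < (f 0).re then 1 else -1 with hε
  have hεor : ε = 1 ∨ ε = -1 := by rw [hε]; split_ifs <;> simp
  have hεsq : ε * ε = 1 := by rcases hεor with h | h <;> rw [h] <;> norm_num
  have hf0re : f 0 = ((f 0).re : ℂ) := by
    have h := hfH 0
    rw [neg_zero] at h
    exact (Complex.conj_eq_iff_re.1 h.symm).symm
  have habs0 : ‖f 0‖ = |(f 0).re| := by
    nth_rewrite 1 [hf0re]
    exact (Complex.norm_real _).trans (Real.norm_eq_abs _)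
  have hf0eq : f 0 = ((ε * Real.exp r : ℝ) : ℂ) := by
    by_cases hpos : 0 < (f 0).re
    · rw [hε, if_pos hpos, one_mul, her, habs0, abs_of_pos hpos]
      exact hf0re
    · have hrene : (f 0).re ≠ 0 := by
        intro h0
        exact hf0 (by rw [hf0re, h0]; norm_num)
      have hneg : (f 0).re < 0 := lt_of_le_of_ne (not_lt.1 hpos) hrene
      rw [hε, if_neg hpos, her, habs0, abs_of_neg hneg,
        show (-1 : ℝ) * -(f 0).re = (f 0).re by ring]
      exact hf0re
  have hg0eq : g 0 = ((ε * Real.exp (-r) : ℝ) : ℂ) := by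
    have hre : (ε * Real.exp r) * (ε * Real.exp (-r)) = 1 := by
      rw [show (ε * Real.exp r) * (ε * Real.exp (-r)) =
        (ε * ε) * (Real.exp r * Real.exp (-r)) by ring, hεsq, ← Real.exp_add,
        add_neg_cancel, Real.exp_zero, mul_one]
    apply mul_left_cancel₀ hf0
    rw [hc, hf0eq, ← Complex.ofReal_mul, hre, Complex.ofReal_one]
  -- phase functions
  set α : X → ℂ := fun x => f x / ((ε * Real.exp (P x + r) : ℝ) : ℂ) with hα
  set β : X → ℂ := fun x => g x / ((ε * Real.exp (P x - r) : ℝ) : ℂ) with hβ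
  have hεne : ε ≠ 0 := by rcases hεor with h | h <;> rw [h] <;> norm_num
  have hdenne : ∀ t : ℝ, ((ε * Real.exp t : ℝ) : ℂ) ≠ 0 := by
    intro t
    rw [Ne, Complex.ofReal_eq_zero]
    exact mul_ne_zero hεne (Real.exp_ne_zero t)
  have hfeq : ∀ x : X, f x = ((ε * Real.exp (P x + r) : ℝ) : ℂ) * α x := by
    intro x
    rw [hα]
    simp only
    rw [mul_comm]
    exact (div_mul_cancel₀ (f x) (hdenne _)).symm
  have hgeq : ∀ x : X, g x = ((ε * Real.exp (P x - r) : ℝ) : ℂ) * β x := by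
    intro x
    rw [hβ]
    simp only
    rw [mul_comm]
    exact (div_mul_cancel₀ (g x) (hdenne _)).symm
  have habsden : ∀ t : ℝ, |ε * Real.exp t| = Real.exp t := by
    intro t
    rw [abs_mul, abs_of_pos (Real.exp_pos t)]
    rcases hεor with h | h <;> rw [h] <;> norm_num
  have hαabs : ∀ x : X, x ∈ G → ‖α x‖ = 1 := by
    intro x hx
    rw [hα]
    simp only
    rw [norm_div, Complex.norm_real, Real.norm_eq_abs, habsden, habsf x hx, div_self (Real.exp_ne_zero _)]
  have hβabs : ∀ x : X, x ∈ G → ‖β x‖ = 1 := by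
    intro x hx
    rw [hβ]
    simp only
    rw [norm_div, Complex.norm_real, Real.norm_eq_abs, habsden, habsg x hx, div_self (Real.exp_ne_zero _)]
  have hαne : ∀ x : X, x ∈ G → α x ≠ 0 := by
    intro x hx h
    have := hαabs x hx
    rw [h] at this
    simp at this
  have hβne : ∀ x : X, x ∈ G → β x ≠ 0 := by
    intro x hx h
    have := hβabs x hx
    rw [h] at this
    simp at this
  have hα0 : α 0 = 1 := by
    rw [hα]
    simp only
    rw [hP0, zero_add, hf0eq, div_self (hdenne r)]
  have hαconj : ∀ x : X, α (-x) = starRingEnd ℂ (α x) := by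
    intro x
    rw [hα]
    simp only
    rw [hfH, hPeven, map_div₀, Complex.conj_ofReal]
  have hβconj : ∀ x : X, β (-x) = starRingEnd ℂ (β x) := by
    intro x
    rw [hβ]
    simp only
    rw [hgH, hPeven, map_div₀, Complex.conj_ofReal]
  have hmulconjα : ∀ x : X, x ∈ G → α x * starRingEnd ℂ (α x) = 1 := by
    intro x hx
    rw [Complex.mul_conj, Complex.normSq_eq_norm_sq, hαabs x hx]
    norm_num
  -- the key phase equation
  have hstar : ∀ x y : X, x ∈ G → y ∈ G →
      α (x + y) * β (x - y) = α x * α y * β x * starRingEnd ℂ (β y) := by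
    intro x y hx hy
    have hnum : f (x + y) * g (x - y) = f x * f y * g x * starRingEnd ℂ (g y) := by
      rw [← hgH]; exact hKB x y
    have hden : (ε * Real.exp (P (x+y) + r)) * (ε * Real.exp (P (x-y) - r)) =
        ((ε * Real.exp (P x + r)) * (ε * Real.exp (P y + r))) *
        ((ε * Real.exp (P x - r)) * (ε * Real.exp (P y - r))) := by
      have hq : (P (x+y) + r) + (P (x-y) - r) =
          ((P x + r) + (P y + r)) + ((P x - r) + (P y - r)) := by
        have := hPquad x y hx hy; linarith
      calc (ε * Real.exp (P (x+y) + r)) * (ε * Real.exp (P (x-y) - r))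
          = (ε * ε) * Real.exp ((P (x+y) + r) + (P (x-y) - r)) := by
            rw [Real.exp_add (P (x+y) + r) (P (x-y) - r)]; ring
        _ = ((ε * ε) * (ε * ε)) *
            Real.exp (((P x + r) + (P y + r)) + ((P x - r) + (P y - r))) := by
            rw [hq, hεsq]; ring
        _ = ((ε * Real.exp (P x + r)) * (ε * Real.exp (P y + r))) *
            ((ε * Real.exp (P x - r)) * (ε * Real.exp (P y - r))) := by
            rw [Real.exp_add ((P x + r) + (P y + r)) ((P x - r) + (P y - r)),
              Real.exp_add (P x + r) (P y + r), Real.exp_add (P x - r) (P y - r)]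
            ring
    have hconjβ : starRingEnd ℂ (β y) =
        starRingEnd ℂ (g y) / ((ε * Real.exp (P y - r) : ℝ) : ℂ) := by
      rw [hβ]
      simp only
      rw [map_div₀, Complex.conj_ofReal]
    rw [hα, hβ, hconjβ]
    simp only
    rw [div_mul_div_comm, div_mul_div_comm, div_mul_div_comm, div_mul_div_comm, hnum]
    congr 1
    norm_cast
    linear_combination hden
  -- β is multiplicative on doubles
  have hB : ∀ x : X, x ∈ G → β (x + x) = β x * β x := by
    intro x hx
    have h := hstar x (-x) hx (G.neg_mem hx)
    rw [add_neg_cancel, show x - -x = x + x by abel, hα0, one_mul, hαconj, hβconj,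
      Complex.conj_conj] at h
    rw [h, show α x * starRingEnd ℂ (α x) * β x * β x =
      (α x * starRingEnd ℂ (α x)) * (β x * β x) by ring, hmulconjα x hx, one_mul]
  have hB2 : ∀ x y : X, x ∈ G → y ∈ G →
      β (x - y) * β (x - y) = (β x * β x) * starRingEnd ℂ (β y * β y) := by
    intro x y hx hy
    have hxy1 : x + y ∈ G := G.add_mem hx hy
    have i := hstar x y hx hy
    have ii := hstar y x hy hx
    have iic := congrArg (starRingEnd ℂ) ii
    simp only [map_mul] at iic
    rw [add_comm y x, show y - x = -(x - y) by abel, hβconj, Complex.conj_conj,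
      Complex.conj_conj] at iic
    have hmul : (α (x+y) * β (x-y)) * (starRingEnd ℂ (α (x+y)) * β (x-y)) =
        (α x * α y * β x * starRingEnd ℂ (β y)) *
        (starRingEnd ℂ (α y) * starRingEnd ℂ (α x) * starRingEnd ℂ (β y) * β x) := by
      rw [i, iic]
    calc β (x-y) * β (x-y)
        = (α (x+y) * starRingEnd ℂ (α (x+y))) * (β (x-y) * β (x-y)) := by
          rw [hmulconjα _ hxy1]; ring
      _ = (α x * starRingEnd ℂ (α x)) * (α y * starRingEnd ℂ (α y)) *
          ((β x * β x) * (starRingEnd ℂ (β y) * starRingEnd ℂ (β y))) := by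
          linear_combination hmul
      _ = (β x * β x) * starRingEnd ℂ (β y * β y) := by
          rw [hmulconjα x hx, hmulconjα y hy, map_mul]; ring
  have hβchar : ∀ u v : X, u ∈ G → v ∈ G → β (u + v) = β u * β v := by
    intro u v hu hv
    obtain ⟨x, hxu⟩ := hdouble u
    obtain ⟨y, hyv⟩ := hdouble (-v)
    have hxG : x ∈ G := by apply hGdiv; rw [two_nsmul, hxu]; exact hu
    have hyG : y ∈ G := by apply hGdiv; rw [two_nsmul, hyv]; exact G.neg_mem hv
    have hxyG : x - y ∈ G := G.sub_mem hxG hyG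
    have h : β ((x - y) + (x - y)) = (β x * β x) * starRingEnd ℂ (β y * β y) :=
      (hB _ hxyG).trans (hB2 x y hxG hyG)
    rw [← hB x hxG, ← hB y hyG, hxu, hyv] at h
    have harg : (x - y) + (x - y) = u + v := by
      have h1 : (x - y) + (x - y) = (x + x) - (y + y) := by abel
      rw [h1, hxu, hyv, sub_neg_eq_add]
    rw [harg, hβconj, Complex.conj_conj] at h
    exact h
  have hαchar : ∀ u v : X, u ∈ G → v ∈ G → α (u + v) = α u * α v := by
    intro u v hu hv
    have h := hstar u v hu hv
    have hβuv : β (u - v) = β u * starRingEnd ℂ (β v) := by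
      rw [sub_eq_add_neg, hβchar u (-v) hu (G.neg_mem hv), hβconj]
    rw [hβuv] at h
    have hne : β u * starRingEnd ℂ (β v) ≠ 0 := by
      apply mul_ne_zero (hβne u hu)
      simpa using hβne v hv
    apply mul_right_cancel₀ hne
    rw [h]; ring
  -- assemble
  refine ⟨G, ε, ε, fun x => α x.1, fun x => β x.1, fun x => P x.1, r,
    hGdiv, hεor, hεor, ?_, ?_, ?_, ?_, ?_, ?_, ?_, ?_, ?_⟩
  · intro x y
    exact hαchar x.1 y.1 x.2 y.2
  · intro x
    exact hαabs x.1 x.2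
  · intro x y
    exact hβchar x.1 y.1 x.2 y.2
  · intro x
    exact hβabs x.1 x.2
  · intro x y
    exact hPquad x.1 y.1 x.2 y.2
  · intro x hx
    rw [hfeq x, Complex.ofReal_mul, Complex.ofReal_exp]
    push_cast
    ring
  · exact supp_f
  · intro x hx
    rw [hgeq x, Complex.ofReal_mul, Complex.ofReal_exp]
    push_cast
    ring
  · exact supp_g
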